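/- Let G be a finite 2-qBMG and let x, y be vertices with a common out-neighbor such that |N⁺(x)| = |N⁺(y)| and |N⁻(x)| = |N⁻(y)|. If there exists a vertex w with xw ∈ E and wy ∈ E, then x ∼̇ y. -/
import Mathlib


/-- Two vertices are equivalent (`x ∼̇ y`) if they have the same
out-neighbors and the same in-neighbors. -/
def dotSim {V : Type*} (E : V → V → Prop) (x y : V) : Prop :=
  (∀ z, E x z ↔ E y z) ∧ (∀ z, E z x ↔ E z y)

/-- `U` and `W` are the color classes of a 2-colored digraph with edge relation `E`:
they partition the vertex set and every edge has one endpoint in each class. -/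
def IsTwoColored {V : Type*} (E : V → V → Prop) (U W : Set V) : Prop :=
  (∀ v, v ∈ U ∨ v ∈ W) ∧ (∀ v, ¬(v ∈ U ∧ v ∈ W)) ∧
    ∀ u v, E u v → (u ∈ U ∧ v ∈ W) ∨ (u ∈ W ∧ v ∈ U)

/-- Axiom (N1). -/
def AxN1 {V : Type*} (E : V → V → Prop) : Prop :=
  ∀ u v, u ≠ v → ¬E u v → ¬E v u → ∀ w t, ¬(E u t ∧ E v w ∧ E t w)

/-- Axiom (N2): bi-transitivity. -/
def AxN2 {V : Type*} (E : V → V → Prop) : Prop :=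
  ∀ u v w t, E u v → E v w → E w t → E u t

/-- Axiom (N3). -/
def AxN3 {V : Type*} (E : V → V → Prop) : Prop :=
  ∀ u v w, E u w → E v w → (∀ z, E u z → E v z) ∨ (∀ z, E v z → E u z)

/-- A 2-qBMG: an irreflexive 2-colored digraph satisfying (N1), (N2), (N3). -/
def IsQBMG {V : Type*} (E : V → V → Prop) (U W : Set V) : Prop :=
  (∀ v, ¬E v v) ∧ IsTwoColored E U W ∧ AxN1 E ∧ AxN2 E ∧ AxN3 E

/-- An automorphism of the digraph: a permutation mapping edges to edges. -/
def IsAut {V : Type*} (E : V → V → Prop) (π : Equiv.Perm V) : Prop :=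
  ∀ u v, E u v → E (π u) (π v)

/-- A color-preserving automorphism of the 2-colored digraph. -/
def IsAutI {V : Type*} (E : V → V → Prop) (U W : Set V) (π : Equiv.Perm V) : Prop :=
  IsAut E π ∧ (∀ v ∈ U, π v ∈ U) ∧ (∀ v ∈ W, π v ∈ W)

/-- Let `G` be a finite 2-qBMG and let `x`, `y` be vertices with a
common out-neighbor such that `|N⁺(x)| = |N⁺(y)|` and `|N⁻(x)| = |N⁻(y)|`.  If there
is a vertex `w` with `xw ∈ E` and `wy ∈ E`, then `x ∼̇ y`. -/
theorem stmt_9 {V : Type*} [Fintype V] [DecidableEq V] (E : V → V → Prop) (U W : Set V)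
    (hG : IsQBMG E U W) (x y w₀ : V) (hxw₀ : E x w₀) (hyw₀ : E y w₀)
    (hout : {z : V | E x z}.ncard = {z : V | E y z}.ncard)
    (hin : {z : V | E z x}.ncard = {z : V | E z y}.ncard)
    (w : V) (hxw : E x w) (hwy : E w y) :
    dotSim E x y := by
  obtain ⟨-, -, -, hN2, hN3⟩ := hG
  constructor
  · -- out-neighborhoods
    rcases hN3 x y w₀ hxw₀ hyw₀ with h | h
    · have heq : {z : V | E x z} = {z : V | E y z} :=
        Set.eq_of_subset_of_ncard_le (fun z hz => h z hz) (le_of_eq hout.symm)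
      exact fun z => Set.ext_iff.mp heq z
    · have heq : {z : V | E y z} = {z : V | E x z} :=
        Set.eq_of_subset_of_ncard_le (fun z hz => h z hz) (le_of_eq hout)
      exact fun z => (Set.ext_iff.mp heq z).symm
  · -- in-neighborhoods
    have heq : {z : V | E z x} = {z : V | E z y} :=
      Set.eq_of_subset_of_ncard_le (fun z hz => hN2 z x w y hz hxw hwy)
        (le_of_eq hin.symm)
    exact fun z => Set.ext_iff.mp heq z
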